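/- Let N ≥ 0 and ε > 0, and let Z be Laplace-distributed with location N and scale 1/ε. Then the variance of Ñ = max(0, Z) equals (1/ε²)·(2 − exp(−εN)) − (N/ε)·exp(−εN) − (1/(4ε²))·exp(−2εN). -/

import Mathlib

open Real MeasureTheory

open Set Filter Topology

/-- The Laplace density with location `N` and scale `1/ε`. -/
noncomputable def laplaceDensity (ε N z : ℝ) : ℝ := ε / 2 * Real.exp (-ε * |z - N|)

private lemma hasDerivAt_aux (a b c d x : ℝ) :
    HasDerivAt (fun x => Real.exp (a*x) * (b + c*x + d*x^2))
      (Real.exp (a*x) * ((a*b + c) + (a*c + 2*d)*x + (a*d)*x^2)) x := by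
  have h1 : HasDerivAt (fun x : ℝ => a * x) a x := by
    simpa using (hasDerivAt_id x).const_mul a
  have h2 : HasDerivAt (fun x : ℝ => Real.exp (a*x)) (Real.exp (a*x) * a) x := h1.exp
  have hc : HasDerivAt (fun x : ℝ => c * x) c x := by simpa using (hasDerivAt_id x).const_mul c
  have hd : HasDerivAt (fun x : ℝ => d * x^2) (d * (2*x)) x := by
    simpa using (hasDerivAt_pow 2 x).const_mul d
  have h3 : HasDerivAt (fun x : ℝ => b + c*x + d*x^2) (0 + c + d * (2*x)) x :=
    ((hasDerivAt_const x b).add hc).add hd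
  have : HasDerivAt (fun x => Real.exp (a*x) * (b + c*x + d*x^2))
      (Real.exp (a*x) * a * (b + c*x + d*x^2) + Real.exp (a*x) * (0 + c + d * (2*x))) x := h2.mul h3
  convert this using 1
  ring

private lemma tendsto_aux {ε : ℝ} (hε : 0 < ε) (b c d : ℝ) :
    Tendsto (fun x => Real.exp (-ε*x) * (b + c*x + d*x^2)) atTop (𝓝 0) := by
  have h : ∀ n : ℕ, Tendsto (fun x : ℝ => x^n * Real.exp (-ε*x)) atTop (𝓝 0) := by
    intro n
    have := tendsto_rpow_mul_exp_neg_mul_atTop_nhds_zero n ε hε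
    refine this.congr fun x => ?_
    rw [Real.rpow_natCast]
  have h2 := ((h 0).const_mul b).add (((h 1).const_mul c).add ((h 2).const_mul d))
  simp only [add_zero, mul_zero] at h2
  refine h2.congr fun x => ?_
  ring

private lemma integral_pieces (N ε : ℝ) (hN : 0 ≤ N) (hε : 0 < ε) (k : ℕ) (hk : k ≠ 0)
    (F G : ℝ → ℝ) (L : ℝ)
    (hF : ∀ x, HasDerivAt F (x^k * (ε/2 * Real.exp (-ε*(N-x)))) x)
    (hG : ∀ x, HasDerivAt G (x^k * (ε/2 * Real.exp (-ε*(x-N)))) x)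
    (hGt : Tendsto G atTop (𝓝 L)) :
    ∫ z : ℝ, (max 0 z)^k * laplaceDensity ε N z = (F N - F 0) + (L - G N) := by
  have hcont : Continuous fun z : ℝ => z ^ k * laplaceDensity ε N z := by
    unfold laplaceDensity
    exact (continuous_pow k).mul (continuous_const.mul (Real.continuous_exp.comp
      (continuous_const.mul ((continuous_id.sub continuous_const).abs))))
  have hstep1 : ∫ z : ℝ, (max 0 z)^k * laplaceDensity ε N z
      = ∫ z in Ioi (0:ℝ), z ^ k * laplaceDensity ε N z := by
    rw [← integral_indicator measurableSet_Ioi]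
    refine integral_congr_ae (Eventually.of_forall fun z => ?_)
    rcases le_or_gt z 0 with h | h
    · simp [indicator, h.not_gt, max_eq_left h, zero_pow hk]
    · simp [indicator, h, max_eq_right h.le]
  -- Ioi N part
  have hEqOnG : EqOn (fun z : ℝ => z ^ k * laplaceDensity ε N z)
      (fun z : ℝ => z ^ k * (ε/2 * Real.exp (-ε*(z-N)))) (Ioi N) := by
    intro z hz
    simp only [laplaceDensity, abs_of_nonneg (sub_nonneg.2 (le_of_lt (mem_Ioi.mp hz)))]
  have hGnn : ∀ x ∈ Ioi N, 0 ≤ x ^ k * (ε/2 * Real.exp (-ε*(x-N))) := by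
    intro x hx
    have hx0 : (0:ℝ) ≤ x := hN.trans (le_of_lt hx)
    positivity
  have hGint : IntegrableOn (fun z : ℝ => z ^ k * (ε/2 * Real.exp (-ε*(z-N)))) (Ioi N) :=
    integrableOn_Ioi_deriv_of_nonneg' (fun x _ => hG x) hGnn hGt
  have hGval : ∫ z in Ioi N, z ^ k * laplaceDensity ε N z = L - G N := by
    rw [setIntegral_congr_fun measurableSet_Ioi hEqOnG]
    exact integral_Ioi_of_hasDerivAt_of_nonneg' (fun x _ => hG x) hGnn hGt
  -- Ioc part
  have hEqOnF : EqOn (fun z : ℝ => z ^ k * laplaceDensity ε N z)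
      (fun z : ℝ => z ^ k * (ε/2 * Real.exp (-ε*(N-z)))) (Ioc 0 N) := by
    intro z hz
    have : |z - N| = N - z := by
      rw [abs_of_nonpos (sub_nonpos.2 hz.2)]; ring
    simp only [laplaceDensity, this]
  have hFval : ∫ z in Ioc 0 N, z ^ k * laplaceDensity ε N z = F N - F 0 := by
    rw [setIntegral_congr_fun measurableSet_Ioc hEqOnF,
      ← intervalIntegral.integral_of_le hN]
    exact intervalIntegral.integral_eq_sub_of_hasDerivAt (fun x _ => hF x)
      (Continuous.intervalIntegrable (by
        exact (continuous_pow k).mul (continuous_const.mul (Real.continuous_exp.comp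
          (continuous_const.mul (continuous_const.sub continuous_id)))) ) _ _)
  rw [hstep1, ← Ioc_union_Ioi_eq_Ioi hN,
    setIntegral_union (Ioc_disjoint_Ioi le_rfl) measurableSet_Ioi
      (hcont.integrableOn_Ioc) ((hGint.congr_fun ?_ measurableSet_Ioi)),
    hFval, hGval]
  exact fun z hz => (hEqOnG hz).symm

private lemma moment1 (N ε : ℝ) (hN : 0 ≤ N) (hε : 0 < ε) :
    ∫ z : ℝ, max 0 z * laplaceDensity ε N z = N + Real.exp (-ε*N)/(2*ε) := by
  have hε' : ε ≠ 0 := ne_of_gt hε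
  have key := integral_pieces N ε hN hε 1 one_ne_zero
    (fun x => Real.exp (ε*x) * (-(Real.exp (-ε*N)/(2*ε)) + (Real.exp (-ε*N)/2)*x + 0*x^2))
    (fun x => Real.exp (-ε*x) * (-(Real.exp (ε*N)/(2*ε)) + (-(Real.exp (ε*N)/2))*x + 0*x^2))
    0 ?_ ?_ ?_
  · rw [show (fun z : ℝ => max 0 z * laplaceDensity ε N z)
        = fun z : ℝ => (max 0 z)^1 * laplaceDensity ε N z by funext z; rw [pow_one]]
    rw [key]
    have hrw : Real.exp (-ε*N) = (Real.exp (ε*N))⁻¹ := by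
      rw [← Real.exp_neg]; ring_nf
    rw [hrw]
    field_simp
    simp only [mul_zero, Real.exp_zero]; ring
  · intro x
    have := hasDerivAt_aux ε (-(Real.exp (-ε*N)/(2*ε))) (Real.exp (-ε*N)/2) 0 x
    convert this using 1
    rw [show -ε*(N-x) = (-ε*N) + ε*x by ring, Real.exp_add]
    field_simp
    ring
  · intro x
    have := hasDerivAt_aux (-ε) (-(Real.exp (ε*N)/(2*ε))) (-(Real.exp (ε*N)/2)) 0 x
    convert this using 1
    rw [show -ε*(x-N) = (ε*N) + -ε*x by ring, Real.exp_add]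
    field_simp
    ring
  · exact tendsto_aux hε _ _ _

private lemma moment2 (N ε : ℝ) (hN : 0 ≤ N) (hε : 0 < ε) :
    ∫ z : ℝ, (max 0 z)^2 * laplaceDensity ε N z
      = N^2 + (2 - Real.exp (-ε*N))/ε^2 := by
  have hε' : ε ≠ 0 := ne_of_gt hε
  have key := integral_pieces N ε hN hε 2 two_ne_zero
    (fun x => Real.exp (ε*x) * (Real.exp (-ε*N)/ε^2 + (-(Real.exp (-ε*N)/ε))*x
      + (Real.exp (-ε*N)/2)*x^2))
    (fun x => Real.exp (-ε*x) * (-(Real.exp (ε*N)/ε^2) + (-(Real.exp (ε*N)/ε))*x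
      + (-(Real.exp (ε*N)/2))*x^2))
    0 ?_ ?_ ?_
  · rw [key]
    have hrw : Real.exp (-ε*N) = (Real.exp (ε*N))⁻¹ := by
      rw [← Real.exp_neg]; ring_nf
    rw [hrw]
    field_simp
    rw [mul_zero, Real.exp_zero]; ring
  · intro x
    have := hasDerivAt_aux ε (Real.exp (-ε*N)/ε^2) (-(Real.exp (-ε*N)/ε)) (Real.exp (-ε*N)/2) x
    convert this using 1
    rw [show -ε*(N-x) = (-ε*N) + ε*x by ring, Real.exp_add]
    field_simp
    ring
  · intro x
    have := hasDerivAt_aux (-ε) (-(Real.exp (ε*N)/ε^2)) (-(Real.exp (ε*N)/ε)) (-(Real.exp (ε*N)/2)) x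
    convert this using 1
    rw [show -ε*(x-N) = (ε*N) + -ε*x by ring, Real.exp_add]
    field_simp
    ring
  · exact tendsto_aux hε _ _ _

theorem variance_truncated_laplace (N ε : ℝ) (hN : 0 ≤ N) (hε : 0 < ε) :
    (∫ z : ℝ, (max 0 z) ^ 2 * laplaceDensity ε N z)
      - (∫ z : ℝ, max 0 z * laplaceDensity ε N z) ^ 2 =
      1 / ε ^ 2 * (2 - Real.exp (-ε * N)) - N / ε * Real.exp (-ε * N)
        - 1 / (4 * ε ^ 2) * Real.exp (-2 * ε * N) := by
  rw [moment1 N ε hN hε, moment2 N ε hN hε,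
    show (-2) * ε * N = (-ε*N) + (-ε*N) by ring, Real.exp_add]
  have hε' : ε ≠ 0 := ne_of_gt hε
  field_simp
  ring
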